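/- Let H be a division ring of finite dimension n over its center k, and assume k is infinite. If F is a division ring that is a classical right quotient ring of the ring H[X] of polynomial functions on H (via an injective ring homomorphism), and F' is a division ring that is a classical right quotient ring of the iterated polynomial ring H_c[t₁,…,t_n] in n central variables over H (via an injective ring homomorphism), then F and F' are isomorphic as rings. -/

import Mathlib

universe u v w x

/-- The subgroup of ring automorphisms of `M` fixing the image of `ι` pointwise
(the Galois group of the extension `M/F` given by `ι`). -/
def fixingAut {F M : Type*} [DivisionRing F] [DivisionRing M] (ι : F →+* M) :
    Subgroup (RingAut M) where
  carrier := {σ | ∀ x : F, σ (ι x) = ι x}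
  one_mem' := fun _ => rfl
  mul_mem' := by
    intro a b ha hb x
    show a (b (ι x)) = ι x
    rw [hb x, ha x]
  inv_mem' := by
    intro a ha x
    show a.symm (ι x) = ι x
    conv_lhs => rw [← ha x]
    exact a.symm_apply_apply _

/-- The extension `M/F` given by `ι : F →+* M` is Galois: every element of `M` fixed by all
ring automorphisms of `M` fixing `ι(F)` pointwise lies in `ι(F)`. -/
def IsGaloisExt {F M : Type*} [DivisionRing F] [DivisionRing M] (ι : F →+* M) : Prop :=
  ∀ m : M, (∀ σ ∈ fixingAut ι, σ m = m) → m ∈ Set.range ι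

/-- The ring `H[X]` of polynomial functions on a division ring `H`: the subring of `H → H`
(with pointwise operations) generated by the constant functions and the identity function. -/
def polyFunRing (H : Type*) [DivisionRing H] : Subring (H → H) :=
  Subring.closure ({f | ∃ c : H, f = Function.const H c} ∪ {id})

/-- `F` is a classical right quotient ring of `R` via the injective ring homomorphism `φ`:
every element of `F` is of the form `φ a * (φ b)⁻¹` with `b ≠ 0`. -/
def IsClassicalRightQuotient {R F : Type*} [Ring R] [DivisionRing F] (φ : R →+* F) : Prop :=
  Function.Injective φ ∧ ∀ x : F, ∃ a b : R, b ≠ 0 ∧ x = φ a * (φ b)⁻¹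

/-- Auxiliary construction for the iterated polynomial ring. -/
noncomputable def IterPolyAux (H : Type u) [Ring H] : ℕ → ((T : Type u) × Ring T)
  | 0 => ⟨H, inferInstance⟩
  | n + 1 =>
    letI := (IterPolyAux H n).2
    ⟨Polynomial (IterPolyAux H n).1, inferInstance⟩

/-- The iterated polynomial ring `H_c[t₁, …, t_n]` in `n` central variables over `H`:
`IterPoly H 0 = H` and `IterPoly H (n + 1) = Polynomial (IterPoly H n)`. -/
def IterPoly (H : Type u) [Ring H] (n : ℕ) : Type u := (IterPolyAux H n).1

noncomputable instance (H : Type u) [Ring H] (n : ℕ) : Ring (IterPoly H n) :=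
  (IterPolyAux H n).2

section Aux

section PartA

variable {R : Type*} {F : Type*} {F' : Type*} [Ring R] [DivisionRing F] [DivisionRing F']
variable {φ : R →+* F} {φ' : R →+* F'}

namespace CRQ

theorem ne_zero (hφ : IsClassicalRightQuotient φ) {b : R} (hb : b ≠ 0) : φ b ≠ 0 := by
  intro h
  exact hb (hφ.1 (by rw [h, map_zero]))

theorem one_ne_zero' (hφ : IsClassicalRightQuotient φ) : (1 : R) ≠ 0 := by
  intro h
  have : (1 : F) = 0 := by rw [← map_one φ, h, map_zero]
  exact one_ne_zero this

theorem ore (hφ : IsClassicalRightQuotient φ) (a : R) {b : R} (hb : b ≠ 0) :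
    ∃ c d : R, d ≠ 0 ∧ a * d = b * c := by
  obtain ⟨c, d, hd, h⟩ := hφ.2 ((φ b)⁻¹ * φ a)
  refine ⟨c, d, hd, hφ.1 ?_⟩
  have hbne := ne_zero hφ hb
  have hdne := ne_zero hφ hd
  have h2 : φ a = φ b * (φ c * (φ d)⁻¹) := by
    rw [← h, ← mul_assoc, mul_inv_cancel₀ hbne, one_mul]
  rw [map_mul, map_mul, h2, mul_assoc, mul_assoc, inv_mul_cancel₀ hdne, mul_one]

theorem mul_ne_zero' (hφ : IsClassicalRightQuotient φ) {a b : R} (ha : a ≠ 0) (hb : b ≠ 0) :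
    a * b ≠ 0 := by
  intro h
  have : φ a * φ b = 0 := by rw [← map_mul, h, map_zero]
  rcases mul_eq_zero.mp this with h' | h'
  exacts [ne_zero hφ ha h', ne_zero hφ hb h']

/-- cancel common right factor -/
theorem frac_mul (hφ : IsClassicalRightQuotient φ) (a : R) {b u : R} (hb : b ≠ 0) (hu : u ≠ 0) :
    φ (a * u) * (φ (b * u))⁻¹ = φ a * (φ b)⁻¹ := by
  rw [map_mul, map_mul, mul_inv_rev, mul_assoc, ← mul_assoc (φ u),
    mul_inv_cancel₀ (ne_zero hφ hu), one_mul]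

theorem welldef (hφ : IsClassicalRightQuotient φ) (hφ' : IsClassicalRightQuotient φ')
    {a b c d : R} (hb : b ≠ 0) (hd : d ≠ 0)
    (h : φ a * (φ b)⁻¹ = φ c * (φ d)⁻¹) :
    φ' a * (φ' b)⁻¹ = φ' c * (φ' d)⁻¹ := by
  obtain ⟨u, v, hv, huv⟩ := ore hφ b hd   -- huv : b * v = d * u
  have hbv : b * v ≠ 0 := mul_ne_zero' hφ hb hv
  have hu : u ≠ 0 := by
    intro hu0
    rw [hu0, mul_zero] at huv
    exact hbv huv
  have h1 : φ (a * v) * (φ (b * v))⁻¹ = φ (c * u) * (φ (b * v))⁻¹ := by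
    rw [frac_mul hφ a hb hv, huv, frac_mul hφ c hd hu]
    exact h
  have h2 : a * v = c * u :=
    hφ.1 (mul_right_cancel₀ (inv_ne_zero (ne_zero hφ hbv)) h1)
  calc φ' a * (φ' b)⁻¹ = φ' (a * v) * (φ' (b * v))⁻¹ := (frac_mul hφ' a hb hv).symm
    _ = φ' (c * u) * (φ' (d * u))⁻¹ := by rw [h2, huv]
    _ = φ' c * (φ' d)⁻¹ := frac_mul hφ' c hd hu

variable (φ φ') in
noncomputable def transfer (hφ : IsClassicalRightQuotient φ) (x : F) : F' :=
  φ' (hφ.2 x).choose * (φ' (hφ.2 x).choose_spec.choose)⁻¹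

theorem transfer_spec (hφ : IsClassicalRightQuotient φ) (hφ' : IsClassicalRightQuotient φ')
    {a b : R} (hb : b ≠ 0) :
    transfer φ φ' hφ (φ a * (φ b)⁻¹) = φ' a * (φ' b)⁻¹ := by
  set x := φ a * (φ b)⁻¹ with hx
  obtain ⟨hd, h⟩ := (hφ.2 x).choose_spec.choose_spec
  exact welldef hφ hφ' hd hb (h ▸ rfl)

theorem add_key {G : Type*} [DivisionRing G] {ψ : R →+* G}
    (hψ : IsClassicalRightQuotient ψ) {a b c d u v : R} (hb : b ≠ 0) (hd : d ≠ 0)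
    (hu : u ≠ 0) (hv : v ≠ 0) (huv : b * v = d * u) :
    ψ a * (ψ b)⁻¹ + ψ c * (ψ d)⁻¹ = ψ (a * v + c * u) * (ψ (b * v))⁻¹ := by
  calc ψ a * (ψ b)⁻¹ + ψ c * (ψ d)⁻¹
      = ψ (a * v) * (ψ (b * v))⁻¹ + ψ (c * u) * (ψ (d * u))⁻¹ := by
        rw [frac_mul hψ a hb hv, frac_mul hψ c hd hu]
    _ = ψ (a * v) * (ψ (b * v))⁻¹ + ψ (c * u) * (ψ (b * v))⁻¹ := by rw [huv]
    _ = ψ (a * v + c * u) * (ψ (b * v))⁻¹ := by rw [map_add, add_mul]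

theorem mul_key {G : Type*} [DivisionRing G] {ψ : R →+* G}
    (hψ : IsClassicalRightQuotient ψ) {a b c d u v : R} (hb : b ≠ 0) (hd : d ≠ 0)
    (hv : v ≠ 0) (huv : c * v = b * u) :
    (ψ a * (ψ b)⁻¹) * (ψ c * (ψ d)⁻¹) = ψ (a * u) * (ψ (d * v))⁻¹ := by
  have hψv := ne_zero hψ hv
  have hψb := ne_zero hψ hb
  have h1 : (ψ b)⁻¹ * ψ c = ψ u * (ψ v)⁻¹ := by
    have h0 : ψ c * ψ v = ψ b * ψ u := by rw [← map_mul, ← map_mul, huv]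
    calc (ψ b)⁻¹ * ψ c = (ψ b)⁻¹ * (ψ c * ψ v) * (ψ v)⁻¹ := by
          rw [← mul_assoc, mul_assoc, mul_inv_cancel₀ hψv, mul_one]
      _ = (ψ b)⁻¹ * (ψ b * ψ u) * (ψ v)⁻¹ := by rw [h0]
      _ = ψ u * (ψ v)⁻¹ := by rw [← mul_assoc, inv_mul_cancel₀ hψb, one_mul]
  simp only [map_mul, mul_inv_rev, mul_assoc]
  congr 1
  rw [← mul_assoc, h1, mul_assoc]

theorem exists_hom (hφ : IsClassicalRightQuotient φ) (hφ' : IsClassicalRightQuotient φ') :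
    ∃ g : F →+* F', ∀ a b : R, b ≠ 0 → g (φ a * (φ b)⁻¹) = φ' a * (φ' b)⁻¹ := by
  have spec := fun {a b : R} (hb : b ≠ 0) => transfer_spec hφ hφ' (a := a) hb
  have rep : ∀ x : F, ∃ a b : R, b ≠ 0 ∧ x = φ a * (φ b)⁻¹ := hφ.2
  have h10 := one_ne_zero' hφ
  refine ⟨{ toFun := transfer φ φ' hφ, map_one' := ?_, map_mul' := ?_, map_zero' := ?_,
            map_add' := ?_ }, fun a b hb => spec hb⟩
  · show transfer φ φ' hφ 1 = 1
    have h2 := spec (a := (1 : R)) h10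
    simpa using h2
  · intro x y
    show transfer φ φ' hφ (x * y) = transfer φ φ' hφ x * transfer φ φ' hφ y
    obtain ⟨a, b, hb, rfl⟩ := rep x
    obtain ⟨c, d, hd, rfl⟩ := rep y
    obtain ⟨u, v, hv, huv⟩ := ore hφ c hb    -- c * v = b * u
    have hdv : d * v ≠ 0 := mul_ne_zero' hφ hd hv
    rw [mul_key hφ hb hd hv huv, spec hdv, spec hb, spec hd, mul_key hφ' hb hd hv huv]
  · show transfer φ φ' hφ 0 = 0
    have h2 := spec (a := (0 : R)) h10
    simpa using h2
  · intro x y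
    show transfer φ φ' hφ (x + y) = transfer φ φ' hφ x + transfer φ φ' hφ y
    obtain ⟨a, b, hb, rfl⟩ := rep x
    obtain ⟨c, d, hd, rfl⟩ := rep y
    obtain ⟨u, v, hv, huv⟩ := ore hφ b hd    -- b * v = d * u
    have hbv : b * v ≠ 0 := mul_ne_zero' hφ hb hv
    have hu : u ≠ 0 := by
      intro hu0; rw [hu0, mul_zero] at huv; exact hbv huv
    rw [add_key hφ hb hd hu hv huv, spec hbv, spec hb, spec hd,
      add_key hφ' hb hd hu hv huv]

theorem iso (hφ : IsClassicalRightQuotient φ) (hφ' : IsClassicalRightQuotient φ') :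
    Nonempty (F ≃+* F') := by
  obtain ⟨g, hg⟩ := exists_hom hφ hφ'
  obtain ⟨g', hg'⟩ := exists_hom hφ' hφ
  refine ⟨RingEquiv.ofRingHom g g' ?_ ?_⟩
  swap
  · ext x
    obtain ⟨a, b, hb, rfl⟩ := hφ.2 x
    simp [hg a b hb, hg' a b hb]
  · ext x
    obtain ⟨a, b, hb, rfl⟩ := hφ'.2 x
    simp [hg' a b hb, hg a b hb]

end CRQ
end PartA

section Density

variable {H : Type*} [DivisionRing H]

local notation "k" => Subring.center H

namespace PFR

theorem csmul_def (c : k) (x : H) : c • x = (c : H) * x := by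
  rw [Subring.smul_def, smul_eq_mul]

theorem csmul_comm (c : k) (x : H) : (c : H) * x = x * (c : H) :=
  (Subring.mem_center_iff.mp c.2 x).symm

theorem const_mem (c : H) : Function.const H c ∈ polyFunRing H :=
  Subring.subset_closure (Or.inl ⟨c, rfl⟩)

theorem id_mem : (id : H → H) ∈ polyFunRing H :=
  Subring.subset_closure (Or.inr rfl)

/-- membership + linearity -/
def Wmem (f : H → H) : Prop := f ∈ polyFunRing H ∧ IsLinearMap k f

theorem Wmem.zero : Wmem (0 : H → H) :=
  ⟨zero_mem _, ⟨by simp, by simp⟩⟩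

theorem Wmem.add {f g : H → H} (hf : Wmem f) (hg : Wmem g) : Wmem (f + g) :=
  ⟨add_mem hf.1 hg.1, ⟨fun x y => by
      simp only [Pi.add_apply, hf.2.map_add, hg.2.map_add]; abel,
    fun c x => by
      simp only [Pi.add_apply, hf.2.map_smul, hg.2.map_smul, smul_add]⟩⟩

theorem Wmem.sub {f g : H → H} (hf : Wmem f) (hg : Wmem g) : Wmem (f - g) :=
  ⟨sub_mem hf.1 hg.1, ⟨fun x y => by
      simp only [Pi.sub_apply, hf.2.map_add, hg.2.map_add]; abel,
    fun c x => by
      simp only [Pi.sub_apply, hf.2.map_smul, hg.2.map_smul, smul_sub]⟩⟩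

theorem Wmem.conj {f : H → H} (hf : Wmem f) (a c : H) : Wmem (fun x => a * f x * c) := by
  constructor
  · have : (fun x => a * f x * c) = Function.const H a * f * Function.const H c := by
      funext x; rfl
    rw [this]
    exact mul_mem (mul_mem (const_mem a) hf.1) (const_mem c)
  · constructor
    · intro x y
      simp only [hf.2.map_add, add_mul, mul_add]
    · intro q x
      show a * f (q • x) * c = q • (a * f x * c)
      rw [hf.2.map_smul]
      simp only [csmul_def, ← mul_assoc]
      rw [← csmul_comm]

theorem Wmem.bitrans (a c : H) : Wmem (fun x => a * x * c) := by
  have h : Wmem (id : H → H) :=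
    ⟨id_mem, ⟨fun _ _ => rfl, fun _ _ => rfl⟩⟩
  exact h.conj a c

/-- Separating functional: we can kill the first `m` vectors of an independent family and
send the last one to 1, using a "bipolynomial" function. -/
theorem exists_sep : ∀ (m : ℕ) (u : Fin (m + 1) → H), LinearIndependent k u →
    ∃ f : H → H, Wmem f ∧ (∀ i : Fin (m + 1), i.val < m → f (u i) = 0) ∧
      f (u (Fin.last m)) = 1 := by
  intro m
  induction m with
  | zero =>
    intro u hu
    have h0 : u (Fin.last 0) ≠ 0 := hu.ne_zero _
    refine ⟨fun x => (u (Fin.last 0))⁻¹ * x * 1, (Wmem.bitrans _ _), ?_, ?_⟩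
    · intro i hi; omega
    · show (u (Fin.last 0))⁻¹ * u (Fin.last 0) * 1 = 1
      rw [mul_one, inv_mul_cancel₀ h0]
  | succ m IH =>
    intro u hu
    set lst : Fin (m + 2) := Fin.last (m + 1) with hlst
    set p : Fin (m + 2) := ⟨m, by omega⟩ with hp
    by_cases hex : ∃ f : H → H, Wmem f ∧ (∀ i : Fin (m + 2), i.val < m + 1 → f (u i) = 0) ∧
        f (u lst) ≠ 0
    · obtain ⟨f, hf, hvan, hne⟩ := hex
      refine ⟨fun x => (f (u lst))⁻¹ * f x * 1, hf.conj _ _, ?_, ?_⟩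
      · intro i hi
        simp [hvan i hi]
      · simp [inv_mul_cancel₀ hne]
    push_neg at hex
    -- hex : every W-function vanishing on the first m+1 vectors kills the last
    exfalso
    -- the initial segment
    have hcastinj : Function.Injective (Fin.castSucc : Fin (m + 1) → Fin (m + 2)) :=
      Fin.castSucc_injective _
    have hu' : LinearIndependent k (fun i : Fin (m + 1) => u i.castSucc) :=
      hu.comp _ hcastinj
    obtain ⟨f₁, hf₁, hvan₁, hone₁⟩ := IH _ hu'
    -- rewrite f₁'s properties in terms of u
    have hvan₁' : ∀ i : Fin (m + 2), i.val < m → f₁ (u i) = 0 := by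
      intro i hi
      have : i = (⟨i.val, by omega⟩ : Fin (m + 1)).castSucc := by
        ext; simp
      rw [this]
      exact hvan₁ _ hi
    have hone₁' : f₁ (u p) = 1 := by
      have : p = (Fin.last m).castSucc := by ext; simp [hp]
      rw [this]
      exact hone₁
    -- well-definedness
    have wd : ∀ f g : H → H, Wmem f → Wmem g →
        (∀ i : Fin (m + 2), i.val < m → f (u i) = 0) →
        (∀ i : Fin (m + 2), i.val < m → g (u i) = 0) →
        f (u p) = g (u p) → f (u lst) = g (u lst) := by
      intro f g hf hg hfv hgv hfg
      have hsub := hex (f - g) (hf.sub hg)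
      have h0 : ∀ i : Fin (m + 2), i.val < m + 1 → (f - g) (u i) = 0 := by
        intro i hi
        rcases Nat.lt_or_ge i.val m with h | h
        · simp [Pi.sub_apply, hfv i h, hgv i h]
        · have : i = p := Fin.ext (by show i.val = m; omega)
          simp [this, Pi.sub_apply, hfg]
      have := hsub h0
      simpa [Pi.sub_apply, sub_eq_zero] using this
    set q : H := f₁ (u lst) with hq
    -- q is central
    have hqc : ∀ a : H, a * q = q * a := by
      intro a
      have hfa : Wmem (fun x => a * f₁ x * 1) := hf₁.conj a 1
      have hga : Wmem (fun x => 1 * f₁ x * a) := hf₁.conj 1 a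
      have h := wd _ _ hfa hga
        (fun i hi => by simp [hvan₁' i hi])
        (fun i hi => by simp [hvan₁' i hi])
        (by simp [hone₁'])
      simpa using h
    set qq : k := ⟨q, Subring.mem_center_iff.mpr hqc⟩ with hqq
    -- the key valuation property
    have vkey : ∀ f : H → H, Wmem f → (∀ i : Fin (m + 2), i.val < m → f (u i) = 0) →
        f (u lst) = f (u p) * q := by
      intro f hf hfv
      have hg : Wmem (fun x => f (u p) * f₁ x * 1) := hf₁.conj _ 1
      have h := wd _ _ hf hg hfv
        (fun i hi => by simp [hvan₁' i hi])
        (by simp [hone₁'])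
      simpa using h
    set v : H := u lst - qq • u p with hv
    have hkill : ∀ f : H → H, Wmem f → (∀ i : Fin (m + 2), i.val < m → f (u i) = 0) →
        f v = 0 := by
      intro f hf hfv
      let fl : H →ₗ[k] H := hf.2.mk' f
      have hfl : ∀ x, fl x = f x := fun x => rfl
      rw [hv, ← hfl, map_sub, map_smul, hfl, hfl, vkey f hf hfv]
      rw [csmul_def, csmul_comm]
      exact sub_self _
    -- the truncated family
    set u'' : Fin m → H := fun i => u ⟨i.val, by omega⟩ with hu''
    have hu''ind : LinearIndependent k u'' := by
      have : Function.Injective (fun i : Fin m => (⟨i.val, by omega⟩ : Fin (m + 2))) := by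
        intro i j hij
        ext
        simpa using congrArg Fin.val hij
      exact hu.comp _ this
    have hnotind : ¬ LinearIndependent k (Fin.snoc u'' v : Fin (m + 1) → H) := by
      intro hind
      obtain ⟨f, hf, hfv, hfone⟩ := IH _ hind
      have hfv' : ∀ i : Fin (m + 2), i.val < m → f (u i) = 0 := by
        intro i hi
        have h1 : u i = (Fin.snoc u'' v : Fin (m + 1) → H) ((⟨i.val, by omega⟩ : Fin m).castSucc) := by
          rw [Fin.snoc_castSucc]
        rw [h1]
        exact hfv _ (by simpa using hi)
      have h2 : f v = 1 := by
        have hsl : (Fin.snoc u'' v : Fin (m + 1) → H) (Fin.last m) = v := Fin.snoc_last _ _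
        rw [← hsl]
        exact hfone
      rw [hkill f hf hfv'] at h2
      exact zero_ne_one h2
    rw [linearIndependent_fin_snoc] at hnotind
    push_neg at hnotind
    have hvspan : v ∈ Submodule.span k (Set.range u'') := hnotind hu''ind
    -- contradiction with independence of u
    have husnoc : LinearIndependent k (Fin.snoc (Fin.init u) (u (Fin.last (m + 1))) :
        Fin (m + 2) → H) := by
      rw [Fin.snoc_init_self]
      exact hu
    rw [linearIndependent_fin_snoc] at husnoc
    apply husnoc.2
    have hsub : Set.range u'' ⊆ Set.range (Fin.init u) := by
      rintro x ⟨i, rfl⟩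
      refine ⟨⟨i.val, by omega⟩, ?_⟩
      show u (Fin.castSucc ⟨i.val, by omega⟩) = u ⟨i.val, by omega⟩
      congr 1
    have hvspan' : v ∈ Submodule.span k (Set.range (Fin.init u)) :=
      Submodule.span_mono hsub hvspan
    have hpspan : u p ∈ Submodule.span k (Set.range (Fin.init u)) := by
      apply Submodule.subset_span
      refine ⟨⟨m, by omega⟩, ?_⟩
      show u (Fin.castSucc ⟨m, by omega⟩) = u p
      congr 1
    have : u lst = v + qq • u p := by rw [hv]; abel
    rw [hlst] at this
    rw [this]
    exact Submodule.add_mem _ hvspan' (Submodule.smul_mem _ _ hpspan)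

/-- Interpolation: bipolynomial functions achieve arbitrary values on an independent family. -/
theorem exists_interp : ∀ (m : ℕ) (u : Fin m → H), LinearIndependent k u →
    ∀ w : Fin m → H, ∃ f : H → H, Wmem f ∧ ∀ i, f (u i) = w i := by
  intro m
  induction m with
  | zero => exact fun u _ w => ⟨0, Wmem.zero, fun i => i.elim0⟩
  | succ m IH =>
    intro u hu w
    have hu' : LinearIndependent k (fun i : Fin m => u i.castSucc) :=
      hu.comp _ (Fin.castSucc_injective _)
    obtain ⟨g, hg, hgmatch⟩ := IH _ hu' (fun i => w i.castSucc)
    obtain ⟨f₀, hf₀, hvan, hone⟩ := exists_sep m u hu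
    set c : H := w (Fin.last m) - g (u (Fin.last m)) with hc
    refine ⟨g + fun x => c * f₀ x * 1, hg.add (hf₀.conj c 1), ?_⟩
    intro i
    rcases Nat.lt_or_ge i.val m with h | h
    · have hi : i = (⟨i.val, h⟩ : Fin m).castSucc := Fin.ext rfl
      rw [Pi.add_apply, hvan i h, mul_zero, zero_mul, add_zero, hi]
      exact hgmatch _
    · have hi : i = Fin.last m := Fin.ext (by show i.val = m; omega)
      rw [Pi.add_apply, hi, hone, mul_one, mul_one, hc]
      abel

/-- Jacobson-density style conclusion: every `k`-linear endomorphism of `H` is a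
polynomial function, when `H` is finite-dimensional over its center. -/
theorem linearMap_mem_polyFunRing [FiniteDimensional k H] (ℓ : H →ₗ[k] H) :
    ⇑ℓ ∈ polyFunRing H := by
  let b := Module.finBasis k H
  obtain ⟨f, hf, hmatch⟩ := exists_interp _ b b.linearIndependent (fun i => ℓ (b i))
  have : (hf.2.mk' f) = ℓ := b.ext fun i => hmatch i
  have hcoe : ⇑ℓ = f := by rw [← this]; rfl
  rw [hcoe]
  exact hf.1

end PFR
end Density

section B2

variable {H : Type u} [DivisionRing H]

local notation "k" => Subring.center H

namespace IPR

theorem central_comm (c : k) (y : H) : y * (c : H) = (c : H) * y :=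
  Subring.mem_center_iff.mp c.2 y

/-- constants -/
noncomputable def cHom : ∀ m : ℕ, H →+* IterPoly H m
  | 0 => RingHom.id H
  | m + 1 =>
    ((Polynomial.C).comp (cHom m) : H →+* Polynomial (IterPoly H m))

/-- variables -/
noncomputable def varP : ∀ (m : ℕ), ℕ → IterPoly H m
  | 0, _ => 0
  | _ + 1, 0 => (Polynomial.X : Polynomial (IterPoly H _))
  | m + 1, i + 1 => (Polynomial.C (varP m i) : Polynomial (IterPoly H m))

/-- evaluation at central scalars -/
noncomputable def evalCg : ∀ (m : ℕ), (ℕ → k) → (IterPoly H m →+* H)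
  | 0, _ => RingHom.id H
  | m + 1, c =>
    (Polynomial.eval₂RingHom' (evalCg m (fun i => c (i + 1))) ((c 0 : H))
      (fun a => central_comm (c 0) _) : Polynomial (IterPoly H m) →+* H)

/-- evaluation into functions `H → H` -/
noncomputable def Efun : ∀ (m : ℕ) (v : ℕ → H → H), (∀ i x y, v i x * y = y * v i x) →
    (IterPoly H m →+* (H → H))
  | 0, _, _ => Pi.constRingHom H H
  | m + 1, v, hv =>
    (Polynomial.eval₂RingHom' (Efun m (fun i => v (i + 1)) (fun i x y => hv (i + 1) x y))
      (v 0) (fun a => funext fun x => (hv 0 x _).symm) : Polynomial (IterPoly H m) →+* (H → H))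

theorem Efun_succ_apply (m : ℕ) (v : ℕ → H → H) (hv : ∀ i x y, v i x * y = y * v i x)
    (p : Polynomial (IterPoly H m)) :
    Efun (m + 1) v hv p =
      Polynomial.eval₂ (Efun m (fun i => v (i + 1)) (fun i x y => hv (i + 1) x y)) (v 0) p := rfl

theorem evalCg_succ_apply (m : ℕ) (c : ℕ → k) (p : Polynomial (IterPoly H m)) :
    evalCg (m + 1) c p =
      Polynomial.eval₂ (evalCg m (fun i => c (i + 1))) ((c 0 : H)) p := rfl

theorem Efun_const : ∀ (m : ℕ) (v : ℕ → H → H) (hv : ∀ i x y, v i x * y = y * v i x) (a : H),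
    Efun m v hv (cHom m a) = Function.const H a
  | 0, _, _, a => rfl
  | m + 1, v, hv, a => by
    show Polynomial.eval₂ _ _ (Polynomial.C (cHom m a)) = _
    rw [Polynomial.eval₂_C]
    exact Efun_const m _ _ a

theorem Efun_var : ∀ (m : ℕ) (v : ℕ → H → H) (hv : ∀ i x y, v i x * y = y * v i x) (i : ℕ),
    i < m → Efun m v hv (varP m i) = v i
  | 0, _, _, i, hi => absurd hi (by omega)
  | m + 1, v, hv, 0, _ => by
    show Polynomial.eval₂ _ _ (Polynomial.X) = _
    rw [Polynomial.eval₂_X]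
  | m + 1, v, hv, i + 1, hi => by
    show Polynomial.eval₂ _ _ (Polynomial.C (varP m i)) = _
    rw [Polynomial.eval₂_C]
    exact Efun_var m _ _ i (by omega)

theorem Efun_apply_eq : ∀ (m : ℕ) (v : ℕ → H → H) (hv : ∀ i x y, v i x * y = y * v i x)
    (c : ℕ → k) (x : H), (∀ i, v i x = (c i : H)) →
    ∀ p : IterPoly H m, Efun m v hv p x = evalCg m c p
  | 0, _, _, _, _, _, _ => rfl
  | m + 1, v, hv, c, x, hvc, p => by
    change Polynomial (IterPoly H m) at p
    induction p using Polynomial.induction_on' with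
    | add p q hp hq =>
      rw [Efun_succ_apply, evalCg_succ_apply, Polynomial.eval₂_add, Polynomial.eval₂_add,
        Pi.add_apply, ← Efun_succ_apply m v hv p, ← Efun_succ_apply m v hv q,
        ← evalCg_succ_apply, ← evalCg_succ_apply, hp, hq]
    | monomial i a =>
      rw [Efun_succ_apply, evalCg_succ_apply, Polynomial.eval₂_monomial,
        Polynomial.eval₂_monomial, Pi.mul_apply, Pi.pow_apply,
        Efun_apply_eq m _ _ (fun j => c (j + 1)) x (fun j => hvc (j + 1)) a, hvc 0]

theorem coe_pow (t : k) (i : ℕ) : ((t ^ i : k) : H) = (t : H) ^ i := by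
  exact SubmonoidClass.coe_pow t i

/-- A polynomial over `H` vanishing at every central element is zero
(the center being infinite and `H` finite-dimensional over it). -/
theorem poly_zero [FiniteDimensional k H] [Infinite k] (q : Polynomial H)
    (h : ∀ t : k, q.eval ((t : H)) = 0) : q = 0 := by
  let b := Module.finBasis k H
  apply Polynomial.ext
  intro s
  rw [Polynomial.coeff_zero]
  have hrepr : ∀ j, b.repr (q.coeff s) j = 0 := by
    intro j
    let Λ : H →ₗ[k] k := b.coord j
    let r : Polynomial k := ∑ i ∈ q.support, Polynomial.C (Λ (q.coeff i)) * Polynomial.X ^ i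
    have hcoeff : ∀ s', r.coeff s' = Λ (q.coeff s') := by
      intro s'
      rw [Polynomial.finset_sum_coeff]
      simp only [Polynomial.coeff_C_mul, Polynomial.coeff_X_pow, mul_ite, mul_one, mul_zero]
      rw [Finset.sum_ite_eq q.support s' (fun i => Λ (q.coeff i))]
      by_cases hs : s' ∈ q.support
      · rw [if_pos hs]
      · rw [if_neg hs, Polynomial.notMem_support_iff.mp hs, map_zero]
    have heval : ∀ t : k, r.eval t = 0 := by
      intro t
      have h2 : Λ (q.eval ((t : H))) = 0 := by rw [h t, map_zero]
      rw [Polynomial.eval_eq_sum, Polynomial.sum, map_sum] at h2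
      rw [← h2, Polynomial.eval_finset_sum]
      apply Finset.sum_congr rfl
      intro i _
      have hc : q.coeff i * ((t : H)) ^ i = (t ^ i : k) • q.coeff i := by
        rw [← coe_pow, central_comm (t ^ i) (q.coeff i), Subring.smul_def, smul_eq_mul]
      simp only [Polynomial.eval_mul, Polynomial.eval_C, Polynomial.eval_pow, Polynomial.eval_X]
      rw [hc, map_smul, smul_eq_mul, mul_comm]
    have hr0 : r = 0 := Polynomial.zero_of_eval_zero r heval
    have := hcoeff s
    rw [hr0, Polynomial.coeff_zero] at this
    exact this.symm
  have : b.repr (q.coeff s) = 0 := Finsupp.ext hrepr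
  exact b.repr.map_eq_zero_iff.mp this

theorem evalCg_injective [FiniteDimensional k H] [Infinite k] :
    ∀ (m : ℕ) (p : IterPoly H m),
      (∀ c : ℕ → k, (∀ i, m ≤ i → c i = 0) → evalCg m c p = 0) → p = 0 := by
  intro m
  induction m with
  | zero =>
    intro p h
    exact h (fun _ => 0) (fun i _ => rfl)
  | succ m IH =>
    intro p h
    change Polynomial (IterPoly H m) at p
    show p = (0 : Polynomial (IterPoly H m))
    apply Polynomial.ext
    intro s
    rw [Polynomial.coeff_zero]
    apply IH
    intro ct hct
    let q' : Polynomial H := p.map (evalCg m ct)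
    have hq' : ∀ t : k, q'.eval ((t : H)) = 0 := by
      intro t
      have he : q'.eval ((t : H)) = Polynomial.eval₂ (evalCg m ct) ((t : H)) p :=
        Polynomial.eval_map _ _
      rw [he]
      let c : ℕ → k := fun i => match i with | 0 => t | i + 1 => ct i
      have h1 : evalCg (m + 1) c p = 0 := by
        apply h c
        intro i hi
        match i, hi with
        | i + 1, hi => exact hct i (by omega)
      rw [evalCg_succ_apply] at h1
      exact h1
    have hq0 : q' = 0 := poly_zero q' hq'
    have hco := congrArg (fun r => Polynomial.coeff r s) hq0
    simpa [q', Polynomial.coeff_map] using hco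

end IPR
end B2

section Main

variable {H : Type u} [DivisionRing H]

local notation "k" => Subring.center H

namespace IPR

open PFR in
theorem Efun_range_subset : ∀ (m : ℕ) (v : ℕ → H → H) (hv : ∀ i x y, v i x * y = y * v i x),
    (∀ i, v i ∈ polyFunRing H) → ∀ p : IterPoly H m, Efun m v hv p ∈ polyFunRing H := by
  intro m
  induction m with
  | zero =>
    intro v hv hvm p
    exact const_mem (show H from p)
  | succ m IH =>
    intro v hv hvm p
    change Polynomial (IterPoly H m) at p
    induction p using Polynomial.induction_on' with
    | add p q hp hq =>
      rw [Efun_succ_apply, Polynomial.eval₂_add, ← Efun_succ_apply m v hv p,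
        ← Efun_succ_apply m v hv q]
      exact add_mem hp hq
    | monomial i a =>
      rw [Efun_succ_apply, Polynomial.eval₂_monomial]
      exact mul_mem (IH _ _ (fun j => hvm (j + 1)) a) (pow_mem (hvm 0) i)

open PFR in
theorem main_equiv [FiniteDimensional k H] [Infinite k] (n : ℕ)
    (hn : Module.finrank k H = n) :
    Nonempty (IterPoly H n ≃+* polyFunRing H) := by
  classical
  let b : Module.Basis (Fin n) k H := Module.finBasisOfFinrankEq k H hn
  let τ : ℕ → H → k := fun i x => if h : i < n then b.repr x ⟨i, h⟩ else 0
  let v : ℕ → H → H := fun i x => ((τ i x : k) : H)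
  have hv : ∀ i x y, v i x * y = y * v i x := fun i x y => (central_comm (τ i x) y).symm
  let E : IterPoly H n →+* (H → H) := Efun n v hv
  -- injectivity
  have hEzero : ∀ p : IterPoly H n, E p = 0 → p = 0 := by
    intro p hp
    apply evalCg_injective n p
    intro c hc
    set x : H := ∑ i : Fin n, ((c i.val : k) : H) * b i with hx
    have hreprx : ∀ j : Fin n, b.repr x j = c j.val := by
      intro j
      have : x = ∑ i : Fin n, (c i.val : k) • (b i : H) := by
        rw [hx]
        apply Finset.sum_congr rfl
        intro i _
        rw [Subring.smul_def, smul_eq_mul]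
      rw [this]
      have h2 := b.repr_sum_self (fun i : Fin n => c i.val)
      exact congrFun h2 j
    have hτ : ∀ i, v i x = ((c i : k) : H) := by
      intro i
      by_cases hi : i < n
      · show ((dite _ _ _ : k) : H) = _
        rw [dif_pos hi, hreprx ⟨i, hi⟩]
      · show ((dite _ _ _ : k) : H) = _
        rw [dif_neg hi, hc i (by omega)]
    calc evalCg n c p = E p x := (Efun_apply_eq n v hv c x hτ p).symm
      _ = 0 := by rw [hp]; rfl
  -- the coordinate functions are polynomial functions
  have hvm : ∀ i, v i ∈ polyFunRing H := by
    intro i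
    by_cases hi : i < n
    · let L : H →ₗ[k] H :=
        { toFun := fun x => ((b.repr x ⟨i, hi⟩ : k) : H)
          map_add' := by
            intro x y
            show ((b.repr (x + y) ⟨i, hi⟩ : k) : H) =
              ((b.repr x ⟨i, hi⟩ : k) : H) + ((b.repr y ⟨i, hi⟩ : k) : H)
            rw [map_add, Finsupp.add_apply]
            push_cast
            rfl
          map_smul' := by
            intro q x
            show ((b.repr (q • x) ⟨i, hi⟩ : k) : H) = q • ((b.repr x ⟨i, hi⟩ : k) : H)
            rw [map_smul, Finsupp.smul_apply, smul_eq_mul, Subring.smul_def, smul_eq_mul]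
            push_cast
            rfl }
      have hL : v i = ⇑L := by
        funext x
        show ((dite _ _ _ : k) : H) = _
        rw [dif_pos hi]
        rfl
      rw [hL]
      exact linearMap_mem_polyFunRing L
    · have hv0 : v i = (0 : H → H) := by
        funext x
        show ((dite _ _ _ : k) : H) = _
        rw [dif_neg hi]
        rfl
      rw [hv0]
      exact zero_mem _
  have hmem : ∀ p, E p ∈ polyFunRing H := Efun_range_subset n v hv hvm
  -- generators of polyFunRing are in the range of E
  have hgen : ({f | ∃ c : H, f = Function.const H c} ∪ {id} : Set (H → H)) ⊆ ↑E.range := by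
    rintro f (⟨c, rfl⟩ | rfl)
    · exact ⟨cHom n c, Efun_const n v hv c⟩
    · refine ⟨∑ i : Fin n, cHom n (b i) * varP n i.val, ?_⟩
      show E _ = id
      rw [map_sum]
      have hterm : ∀ i : Fin n, E (cHom n (b i) * varP n i.val) =
          Function.const H (b i) * v i.val := by
        intro i
        rw [map_mul, Efun_const, Efun_var n v hv i.val i.isLt]
      rw [Finset.sum_congr rfl (fun i _ => hterm i)]
      funext x
      rw [Finset.sum_apply]
      have hterm2 : ∀ i : Fin n, (Function.const H (b i) * v i.val) x
          = b.repr x i • (b i : H) := by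
        intro i
        show (b i) * v i.val x = _
        have : v i.val x = ((b.repr x i : k) : H) := by
          show ((dite _ _ _ : k) : H) = _
          rw [dif_pos i.isLt]
        rw [this, central_comm, Subring.smul_def, smul_eq_mul]
      rw [Finset.sum_congr rfl (fun i _ => hterm2 i)]
      exact b.sum_repr x
  have hle : polyFunRing H ≤ E.range := (Subring.closure_le (t := E.range)).mpr hgen
  let E' : IterPoly H n →+* polyFunRing H := E.codRestrict _ hmem
  have hinj : Function.Injective E' := by
    intro p q hpq
    have h1 : E p = E q := congrArg Subtype.val hpq
    have h2 : E (p - q) = 0 := by rw [map_sub, h1, sub_self]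
    exact sub_eq_zero.mp (hEzero _ h2)
  have hsurj : Function.Surjective E' := by
    rintro ⟨f, hf⟩
    obtain ⟨p, hp⟩ := hle hf
    exact ⟨p, Subtype.ext hp⟩
  exact ⟨RingEquiv.ofBijective E' ⟨hinj, hsurj⟩⟩

end IPR
end Main

end Aux

theorem fraction_field_of_polyFunRing_iso_fraction_field_of_iterated_central_polynomials
    {H : Type u} [DivisionRing H] [FiniteDimensional (Subring.center H) H] (n : ℕ)
    (hn : Module.finrank (Subring.center H) H = n)
    (hk : Infinite (Subring.center H))
    {F : Type v} [DivisionRing F]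
    (φ : polyFunRing H →+* F) (hφ : IsClassicalRightQuotient φ)
    {F' : Type w} [DivisionRing F']
    (φ' : IterPoly H n →+* F') (hφ' : IsClassicalRightQuotient φ') :
    Nonempty (F ≃+* F') := by
  haveI : Infinite (Subring.center H) := hk
  obtain ⟨ψ⟩ := IPR.main_equiv (H := H) n hn
  let φ'' : polyFunRing H →+* F' := φ'.comp ψ.symm.toRingHom
  have hφ'' : IsClassicalRightQuotient φ'' := by
    constructor
    · exact hφ'.1.comp ψ.symm.injective
    · intro x
      obtain ⟨a, b, hb, hx⟩ := hφ'.2 x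
      refine ⟨ψ a, ψ b, ?_, ?_⟩
      · intro h0
        apply hb
        have h1 : ψ b = ψ 0 := by rw [h0, map_zero]
        exact ψ.injective h1
      · show x = φ' (ψ.symm (ψ a)) * (φ' (ψ.symm (ψ b)))⁻¹
        rw [RingEquiv.symm_apply_apply, RingEquiv.symm_apply_apply]
        exact hx
  exact CRQ.iso hφ hφ''
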